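/- Define the Euler polynomials E_n(x) by (e^t + 1)·∑_{n≥0} E_n(x) t^n/n! = 2 e^{xt} as formal power series over ℚ[x]. Let w₁, w₂ be odd positive integers. Then for all n ≥ 0: w₂^n ∑_{l=0}^{w₂−1} (−1)^l E_n(w₁ x + (w₁/w₂) l) = w₁^n ∑_{l=0}^{w₁−1} (−1)^l E_n(w₂ x + (w₂/w₁) l) as polynomials in x over ℚ. -/

import Mathlib

open scoped Nat

/-- `e^{yt} := ∑_{n≥0} yⁿ tⁿ/n!` as a formal power series. -/
noncomputable def expSer {R : Type*} [CommRing R] [Algebra ℚ R] (y : R) : PowerSeries R :=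
  PowerSeries.mk fun n => (n ! : ℚ)⁻¹ • y ^ n

namespace EulerAux

open PowerSeries

variable {R : Type*} [CommRing R] [Algebra ℚ R]

lemma expSer_eq_rescale (y : R) : expSer y = rescale y (PowerSeries.exp R) := by
  ext n
  simp [expSer, PowerSeries.exp, Algebra.smul_def, mul_comm, one_div]

lemma expSer_mul (a b : R) : expSer a * expSer b = expSer (a + b) := by
  rw [expSer_eq_rescale, expSer_eq_rescale, expSer_eq_rescale]
  exact PowerSeries.exp_mul_exp_eq_exp_add a b

lemma expSer_pow (a : R) (m : ℕ) : (expSer a) ^ m = expSer (m • a) := by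
  induction m with
  | zero =>
    ext n
    simp [expSer]
    cases n <;> simp [PowerSeries.coeff_one]
  | succ k ih =>
    rw [pow_succ, ih, expSer_mul, succ_nsmul]

lemma rescale_expSer (c y : R) : rescale c (expSer y) = expSer (c * y) := by
  ext n
  simp [expSer, rescale_mk, mul_pow, mul_smul_comm]

lemma map_expSer {S : Type*} [CommRing S] [Algebra ℚ S] (f : R →ₐ[ℚ] S) (y : R) :
    PowerSeries.map (f.toRingHom : R →+* S) (expSer y) = expSer (f y) := by
  ext n
  simp [expSer, PowerSeries.coeff_map, map_pow]

lemma constantCoeff_expSer (y : R) : PowerSeries.constantCoeff (expSer y) = 1 := by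
  simp [expSer, ← PowerSeries.coeff_zero_eq_constantCoeff]

section Euler

open Polynomial Finset

variable (Eu : ℕ → Polynomial ℚ)
  (hEu : (expSer (1 : Polynomial ℚ) + 1) * PowerSeries.mk (fun n => (n ! : ℚ)⁻¹ • Eu n)
      = 2 * expSer Polynomial.X)

include hEu

lemma comp_eq (q : Polynomial ℚ) :
    (expSer (1 : Polynomial ℚ) + 1) *
        PowerSeries.mk (fun n => (n ! : ℚ)⁻¹ • (Eu n).comp q) = 2 * expSer q := by
  have h := congrArg (PowerSeries.map ((Polynomial.aeval q :
      Polynomial ℚ →ₐ[ℚ] Polynomial ℚ).toRingHom)) hEu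
  simp only [map_mul, map_add, map_one, map_ofNat] at h
  rw [map_expSer, map_expSer] at h
  have hmk : PowerSeries.map ((Polynomial.aeval q :
      Polynomial ℚ →ₐ[ℚ] Polynomial ℚ).toRingHom)
      (PowerSeries.mk (fun n => (n ! : ℚ)⁻¹ • Eu n))
      = PowerSeries.mk (fun n => (n ! : ℚ)⁻¹ • (Eu n).comp q) := by
    apply PowerSeries.ext
    intro n
    simp [PowerSeries.coeff_map, Polynomial.comp_eq_aeval]
  rw [hmk] at h
  simpa [Polynomial.aeval_X] using h

lemma scaled (c : ℚ) (q : Polynomial ℚ) :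
    (expSer (Polynomial.C c) + 1) *
        PowerSeries.mk (fun n => (Polynomial.C c) ^ n * ((n ! : ℚ)⁻¹ • (Eu n).comp q))
      = 2 * expSer (Polynomial.C c * q) := by
  have h := congrArg (rescale (Polynomial.C c)) (comp_eq Eu hEu q)
  simp only [map_mul, map_add, map_one, map_ofNat, rescale_mk] at h
  rw [rescale_expSer, rescale_expSer, mul_one] at h
  exact h

set_option maxHeartbeats 2000000 in
lemma key (w₁ w₂ : ℕ) (hw₂0 : 0 < w₂) (hw₂ : Odd w₂) :
    (expSer (Polynomial.C (w₁ : ℚ)) + 1) * ((expSer (Polynomial.C (w₂ : ℚ)) + 1) *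
      PowerSeries.mk (fun n => (n ! : ℚ)⁻¹ •
        (Polynomial.C ((w₂ : ℚ) ^ n) *
          ∑ l ∈ Finset.range w₂,
            Polynomial.C ((-1 : ℚ) ^ l) *
              (Eu n).comp (Polynomial.C (w₁ : ℚ) * Polynomial.X +
                Polynomial.C ((w₁ : ℚ) / (w₂ : ℚ) * l)))))
    = 2 * expSer (Polynomial.C ((w₁ : ℚ) * (w₂ : ℚ)) * Polynomial.X) *
        (expSer (Polynomial.C ((w₁ : ℚ) * (w₂ : ℚ))) + 1) := by
  have hw₂ne : (w₂ : ℚ) ≠ 0 := Nat.cast_ne_zero.mpr hw₂0.ne'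
  have step1 : (expSer (Polynomial.C (w₂ : ℚ)) + 1) *
      PowerSeries.mk (fun n => (n ! : ℚ)⁻¹ •
        (Polynomial.C ((w₂ : ℚ) ^ n) *
          ∑ l ∈ Finset.range w₂,
            Polynomial.C ((-1 : ℚ) ^ l) *
              (Eu n).comp (Polynomial.C (w₁ : ℚ) * Polynomial.X +
                Polynomial.C ((w₁ : ℚ) / (w₂ : ℚ) * l))))
      = 2 * expSer (Polynomial.C ((w₁ : ℚ) * (w₂ : ℚ)) * Polynomial.X) *
          ∑ l ∈ Finset.range w₂, (-(expSer (Polynomial.C (w₁ : ℚ)))) ^ l := by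
    have hAser :
        PowerSeries.mk (fun n => (n ! : ℚ)⁻¹ •
          (Polynomial.C ((w₂ : ℚ) ^ n) *
            ∑ l ∈ Finset.range w₂,
              Polynomial.C ((-1 : ℚ) ^ l) *
                (Eu n).comp (Polynomial.C (w₁ : ℚ) * Polynomial.X +
                  Polynomial.C ((w₁ : ℚ) / (w₂ : ℚ) * l))))
        = ∑ l ∈ Finset.range w₂, ((-1 : ℚ) ^ l) •
            PowerSeries.mk (fun n => (Polynomial.C (w₂ : ℚ)) ^ n *
              ((n ! : ℚ)⁻¹ • (Eu n).comp (Polynomial.C (w₁ : ℚ) * Polynomial.X +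
                Polynomial.C ((w₁ : ℚ) / (w₂ : ℚ) * l)))) := by
      apply PowerSeries.ext
      intro n
      rw [map_sum]
      simp only [PowerSeries.coeff_smul, PowerSeries.coeff_mk]
      simp only [Polynomial.smul_eq_C_mul, ← Polynomial.C_pow]
      rw [Finset.mul_sum, Finset.mul_sum]
      refine Finset.sum_congr rfl fun l _ => by ring
    rw [hAser, Finset.mul_sum, Finset.mul_sum]
    refine Finset.sum_congr rfl fun l _ => ?_
    rw [mul_smul_comm, scaled Eu hEu (w₂ : ℚ)
      (Polynomial.C (w₁ : ℚ) * Polynomial.X + Polynomial.C ((w₁ : ℚ) / (w₂ : ℚ) * l))]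
    have harg : Polynomial.C (w₂ : ℚ) *
        (Polynomial.C (w₁ : ℚ) * Polynomial.X + Polynomial.C ((w₁ : ℚ) / (w₂ : ℚ) * l))
        = Polynomial.C ((w₁ : ℚ) * (w₂ : ℚ)) * Polynomial.X + Polynomial.C ((w₁ : ℚ) * l) := by
      rw [mul_add, ← mul_assoc, ← Polynomial.C_mul, ← Polynomial.C_mul]
      congr 2
      · ring
      · field_simp
    have hsm : l • Polynomial.C (w₁ : ℚ) = Polynomial.C ((w₁ : ℚ) * l) := by
      rw [nsmul_eq_mul, ← Polynomial.C_eq_natCast, ← Polynomial.C_mul]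
      exact congrArg Polynomial.C (mul_comm _ _)
    have hul : expSer (Polynomial.C ((w₁ : ℚ) * l)) = (expSer (Polynomial.C (w₁ : ℚ))) ^ l := by
      rw [expSer_pow, hsm]
    rw [harg, ← expSer_mul, hul]
    rcases Nat.even_or_odd l with he | ho
    · rw [Even.neg_pow he (expSer (Polynomial.C (w₁ : ℚ))), Even.neg_pow he (1 : ℚ),
        one_pow, one_smul]
      ring
    · rw [Odd.neg_pow ho (expSer (Polynomial.C (w₁ : ℚ))), Odd.neg_pow ho (1 : ℚ),
        one_pow, neg_smul, one_smul]
      ring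
  rw [step1]
  have geo : (expSer (Polynomial.C (w₁ : ℚ)) + 1) *
      ∑ l ∈ Finset.range w₂, (-(expSer (Polynomial.C (w₁ : ℚ)))) ^ l
      = (expSer (Polynomial.C (w₁ : ℚ))) ^ w₂ + 1 := by
    have h := geom_sum_mul (-(expSer (Polynomial.C (w₁ : ℚ)))) w₂
    rw [hw₂.neg_pow] at h
    linear_combination -h
  have hsm2 : w₂ • Polynomial.C (w₁ : ℚ) = Polynomial.C ((w₁ : ℚ) * (w₂ : ℚ)) := by
    rw [nsmul_eq_mul, ← Polynomial.C_eq_natCast, ← Polynomial.C_mul]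
    exact congrArg Polynomial.C (mul_comm _ _)
  have hpow : (expSer (Polynomial.C (w₁ : ℚ))) ^ w₂
      = expSer (Polynomial.C ((w₁ : ℚ) * (w₂ : ℚ))) := by
    rw [expSer_pow, hsm2]
  rw [hpow] at geo
  linear_combination 2 * expSer (Polynomial.C ((w₁ : ℚ) * (w₂ : ℚ)) * Polynomial.X) * geo

end Euler

lemma ne_zero_of_constCoeff_two (ψ : PowerSeries (Polynomial ℚ))
    (h : PowerSeries.constantCoeff ψ = 2) : ψ ≠ 0 := by
  intro h0
  rw [h0, map_zero] at h
  exact two_ne_zero' (Polynomial ℚ) h.symm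

end EulerAux

/-- with `E_n(x)` the classical Euler polynomials, defined by
`(e^t+1)·∑ E_n(x) tⁿ/n! = 2 e^{xt}`, and w₁, w₂ odd positive integers,
`w₂ⁿ ∑_{l<w₂} (−1)^l E_n(w₁x + (w₁/w₂)l) = w₁ⁿ ∑_{l<w₁} (−1)^l E_n(w₂x + (w₂/w₁)l)`
as polynomials in x over ℚ. -/
theorem euler_symmetry (w₁ w₂ : ℕ) (hw₁0 : 0 < w₁) (hw₂0 : 0 < w₂)
    (hw₁ : Odd w₁) (hw₂ : Odd w₂)
    (Eu : ℕ → Polynomial ℚ)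
    (hEu : (expSer (1 : Polynomial ℚ) + 1) * PowerSeries.mk (fun n => (n ! : ℚ)⁻¹ • Eu n)
      = 2 * expSer Polynomial.X)
    (n : ℕ) :
    Polynomial.C ((w₂ : ℚ) ^ n) *
        ∑ l ∈ Finset.range w₂,
          Polynomial.C ((-1 : ℚ) ^ l) *
            (Eu n).comp (Polynomial.C (w₁ : ℚ) * Polynomial.X +
              Polynomial.C ((w₁ : ℚ) / (w₂ : ℚ) * l))
      = Polynomial.C ((w₁ : ℚ) ^ n) *
          ∑ l ∈ Finset.range w₁,
            Polynomial.C ((-1 : ℚ) ^ l) *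
              (Eu n).comp (Polynomial.C (w₂ : ℚ) * Polynomial.X +
                Polynomial.C ((w₂ : ℚ) / (w₁ : ℚ) * l)) := by
  classical
  have h1 := EulerAux.key Eu hEu w₁ w₂ hw₂0 hw₂
  have h2 := EulerAux.key Eu hEu w₂ w₁ hw₁0 hw₁
  rw [mul_comm (w₂ : ℚ) (w₁ : ℚ)] at h2
  set u := expSer (Polynomial.C (w₁ : ℚ)) with hu
  set v := expSer (Polynomial.C (w₂ : ℚ)) with hv
  set A := PowerSeries.mk (fun n => (n ! : ℚ)⁻¹ •
        (Polynomial.C ((w₂ : ℚ) ^ n) *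
          ∑ l ∈ Finset.range w₂,
            Polynomial.C ((-1 : ℚ) ^ l) *
              (Eu n).comp (Polynomial.C (w₁ : ℚ) * Polynomial.X +
                Polynomial.C ((w₁ : ℚ) / (w₂ : ℚ) * l)))) with hA
  set B := PowerSeries.mk (fun n => (n ! : ℚ)⁻¹ •
        (Polynomial.C ((w₁ : ℚ) ^ n) *
          ∑ l ∈ Finset.range w₁,
            Polynomial.C ((-1 : ℚ) ^ l) *
              (Eu n).comp (Polynomial.C (w₂ : ℚ) * Polynomial.X +
                Polynomial.C ((w₂ : ℚ) / (w₁ : ℚ) * l)))) with hB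
  have hcc : ∀ ψ : PowerSeries (Polynomial ℚ),
      PowerSeries.constantCoeff ψ = 1 → ψ + 1 ≠ 0 := by
    intro ψ hψ
    refine EulerAux.ne_zero_of_constCoeff_two _ ?_
    rw [map_add, map_one, hψ]
    norm_num
  have hune : u + 1 ≠ 0 := hcc u (EulerAux.constantCoeff_expSer _)
  have hvne : v + 1 ≠ 0 := hcc v (EulerAux.constantCoeff_expSer _)
  have hAB : A = B := by
    have hmul : (u + 1) * ((v + 1) * A) = (u + 1) * ((v + 1) * B) := by
      rw [h1]
      rw [show (u + 1) * ((v + 1) * B) = (v + 1) * ((u + 1) * B) by ring, h2]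
    exact mul_left_cancel₀ hvne (mul_left_cancel₀ hune hmul)
  have hcoeff := congrArg (PowerSeries.coeff (R := Polynomial ℚ) n) hAB
  rw [hA, hB, PowerSeries.coeff_mk, PowerSeries.coeff_mk] at hcoeff
  have hfac : (n ! : ℚ) ≠ 0 := Nat.cast_ne_zero.mpr n.factorial_ne_zero
  have := congrArg (fun p => (n ! : ℚ) • p) hcoeff
  simpa [smul_smul, mul_inv_cancel₀ hfac] using this
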